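/- Let X be a Banach space, X_d a Banach sequence space whose canonical vectors ε_n form a basis and whose dual basis ε_n* forms a basis of X_d*. Suppose {x_n} ⊂ X, {y_n} ⊂ X* satisfy: {y(x_n)} ∈ X_d* for all y ∈ X*, {y_n(x)} ∈ X_d for all x ∈ X, and x = Σ_n y_n(x) x_n for all x ∈ X. Then {x_n} is a co-frame and {y_n} is a frame; i.e., there exist positive constants giving the two-sided norm inequalities (1) and (2), so ({x_n},{y_n}) is a cross-frame. -/
import Mathlib


/-- Theorem 5 of the paper: If {x_n} ⊂ X, {y_n} ⊂ X* satisfy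
{y(x_n)} ∈ X_d* for all y ∈ X*, {y_n(x)} ∈ X_d for all x ∈ X, and
x = Σ_n y_n(x) x_n for all x, then {x_n} is a co-frame and {y_n} is a frame,
i.e. ({x_n},{y_n}) is a cross-frame. Membership of the coefficient sequences is
expressed by the (set-theoretic) analysis maps R and Rc into W ≅ X_d and
W* ≅ X_d*. -/
theorem stmt7 {X W : Type*} [NormedAddCommGroup X] [NormedSpace ℂ X] [CompleteSpace X]
    [NormedAddCommGroup W] [NormedSpace ℂ W] [CompleteSpace W]
    (ι : W →ₗ[ℂ] (ℕ → ℂ)) (hι : Function.Injective ι)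
    (e : ℕ → W) (he : ∀ n, ι (e n) = fun j => if n = j then (1 : ℂ) else 0)
    (hbasis : ∀ a : W, HasSum (fun n => ι a n • e n) a)
    (es : ℕ → (W →L[ℂ] ℂ)) (hes : ∀ n a, es n a = ι a n)
    (hdualbasis : ∀ b : W →L[ℂ] ℂ, HasSum (fun n => b (e n) • es n) b)
    (x : ℕ → X) (y : ℕ → (X →L[ℂ] ℂ))
    -- {y_n(x)} ∈ X_d for every x ∈ X:
    (R : X → W) (hR : ∀ (v : X) (n : ℕ), ι (R v) n = y n v)
    -- {y(x_n)} ∈ X_d* for every y ∈ X*: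
    (Rc : (X →L[ℂ] ℂ) → (W →L[ℂ] ℂ))
    (hRc : ∀ (g : X →L[ℂ] ℂ) (n : ℕ), Rc g (e n) = g (x n))
    -- reconstruction formula:
    (hrecon : ∀ v : X, HasSum (fun n => y n v • x n) v) :
    (∃ A B : ℝ, 0 < A ∧ 0 < B ∧
      ∀ v : X, A * ‖v‖ ≤ ‖R v‖ ∧ ‖R v‖ ≤ B * ‖v‖) ∧
    (∃ At Bt : ℝ, 0 < At ∧ 0 < Bt ∧
      ∀ g : X →L[ℂ] ℂ, At * ‖g‖ ≤ ‖Rc g‖ ∧ ‖Rc g‖ ≤ Bt * ‖g‖) := by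
  classical
  -- Two continuous functionals on W agreeing on all e n are equal
  have eq_of_eval : ∀ b c : W →L[ℂ] ℂ, (∀ n, b (e n) = c (e n)) → b = c := by
    intro b c h
    have hb := hdualbasis b
    have hc := hdualbasis c
    have : (fun n => b (e n) • es n) = fun n => c (e n) • es n := by
      funext n; rw [h n]
    rw [this] at hb
    exact hb.unique hc
  -- R is linear
  have Rlin : ∀ (v w : X) (c : ℂ), R (v + w) = R v + R w ∧ R (c • v) = c • R v := by
    intro v w c
    constructor
    · apply hι
      rw [map_add]
      funext n
      simp only [Pi.add_apply, hR, map_add]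
    · apply hι
      rw [map_smul]
      funext n
      simp only [Pi.smul_apply, hR, map_smul, smul_eq_mul]
  let RL : X →ₗ[ℂ] W :=
    { toFun := R
      map_add' := fun v w => (Rlin v w 0).1
      map_smul' := fun c v => by simpa using (Rlin v 0 c).2 }
  -- R is continuous via the closed graph theorem
  have RLcont : Continuous RL := by
    apply RL.continuous_of_seq_closed_graph
    intro u v w hu huw
    apply hι
    funext n
    have h1 : Filter.Tendsto (fun k => es n (R (u k))) Filter.atTop (nhds (es n w)) :=
      (es n).continuous.continuousAt.tendsto.comp huw
    have h2 : Filter.Tendsto (fun k => y n (u k)) Filter.atTop (nhds (y n v)) :=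
      (y n).continuous.continuousAt.tendsto.comp hu
    have he' : (fun k => es n (R (u k))) = fun k => y n (u k) := by
      funext k; rw [hes, hR]
    rw [he'] at h1
    have hh : es n w = y n v := tendsto_nhds_unique h1 h2
    rw [hes] at hh
    show ι w n = ι (R v) n
    rw [hR]
    exact hh
  let RC : X →L[ℂ] W := ⟨RL, RLcont⟩
  have hRC : ∀ v, RC v = R v := fun v => rfl
  -- Rc is linear
  have Rclin : ∀ (g h : X →L[ℂ] ℂ) (c : ℂ),
      Rc (g + h) = Rc g + Rc h ∧ Rc (c • g) = c • Rc g := by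
    intro g h c
    constructor
    · apply eq_of_eval
      intro n
      simp only [ContinuousLinearMap.add_apply, hRc]
    · apply eq_of_eval
      intro n
      simp only [ContinuousLinearMap.smul_apply, hRc, smul_eq_mul]
  let RcL : (X →L[ℂ] ℂ) →ₗ[ℂ] (W →L[ℂ] ℂ) :=
    { toFun := Rc
      map_add' := fun g h => (Rclin g h 0).1
      map_smul' := fun c g => by simpa using (Rclin g 0 c).2 }
  -- Rc is continuous via the closed graph theorem
  have RcLcont : Continuous RcL := by
    apply RcL.continuous_of_seq_closed_graph
    intro u g b hu hub
    apply eq_of_eval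
    intro n
    have h1 : Filter.Tendsto (fun k => (Rc (u k)) (e n)) Filter.atTop (nhds (b (e n))) :=
      (ContinuousLinearMap.apply ℂ ℂ (e n)).continuous.continuousAt.tendsto.comp hub
    have h2 : Filter.Tendsto (fun k => (u k) (x n)) Filter.atTop (nhds (g (x n))) :=
      (ContinuousLinearMap.apply ℂ ℂ (x n)).continuous.continuousAt.tendsto.comp hu
    have he' : (fun k => (Rc (u k)) (e n)) = fun k => (u k) (x n) := by
      funext k; rw [hRc]
    rw [he'] at h1
    show b (e n) = Rc g (e n)
    rw [hRc g n]
    exact tendsto_nhds_unique h1 h2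
  let RcC : (X →L[ℂ] ℂ) →L[ℂ] (W →L[ℂ] ℂ) := ⟨RcL, RcLcont⟩
  have hRcC : ∀ g, RcC g = Rc g := fun g => rfl
  -- upper bounds
  set B : ℝ := ‖RC‖ + 1 with hB
  have hBpos : 0 < B := by positivity
  have hRupper : ∀ v : X, ‖R v‖ ≤ B * ‖v‖ := by
    intro v
    calc ‖R v‖ = ‖RC v‖ := rfl
      _ ≤ ‖RC‖ * ‖v‖ := RC.le_opNorm v
      _ ≤ B * ‖v‖ := by
          apply mul_le_mul_of_nonneg_right _ (norm_nonneg v)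
          simp [hB]
  set Bt : ℝ := ‖RcC‖ + 1 with hBt
  have hBtpos : 0 < Bt := by positivity
  have hRcupper : ∀ g : X →L[ℂ] ℂ, ‖Rc g‖ ≤ Bt * ‖g‖ := by
    intro g
    calc ‖Rc g‖ = ‖RcC g‖ := rfl
      _ ≤ ‖RcC‖ * ‖g‖ := RcC.le_opNorm g
      _ ≤ Bt * ‖g‖ := by
          apply mul_le_mul_of_nonneg_right _ (norm_nonneg g)
          simp [hBt]
  -- key identity: g v = Rc g (R v)
  have hkey : ∀ (g : X →L[ℂ] ℂ) (v : X), g v = Rc g (R v) := by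
    intro g v
    have h1 : HasSum (fun n => g (y n v • x n)) (g v) :=
      (hrecon v).mapL g
    have h2 : HasSum (fun n => ((Rc g) (e n) • es n) (R v)) ((Rc g) (R v)) :=
      (hdualbasis (Rc g)).mapL (ContinuousLinearMap.apply ℂ ℂ (R v))
    have heq : (fun n => g (y n v • x n)) = fun n => ((Rc g) (e n) • es n) (R v) := by
      funext n
      simp only [map_smul, ContinuousLinearMap.smul_apply, smul_eq_mul, hRc, hes, hR]
      ring
    rw [heq] at h1
    exact h1.unique h2
  -- lower bound for Rc
  have hRclower : ∀ g : X →L[ℂ] ℂ, ‖g‖ ≤ B * ‖Rc g‖ := by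
    intro g
    apply ContinuousLinearMap.opNorm_le_bound _ (by positivity)
    intro v
    calc ‖g v‖ = ‖Rc g (R v)‖ := by rw [hkey]
      _ ≤ ‖Rc g‖ * ‖R v‖ := (Rc g).le_opNorm _
      _ ≤ ‖Rc g‖ * (B * ‖v‖) :=
          mul_le_mul_of_nonneg_left (hRupper v) (norm_nonneg _)
      _ = B * ‖Rc g‖ * ‖v‖ := by ring
  -- Banach–Steinhaus: the partial-sum operators of the dual basis expansion
  let Q : ℕ → ((W →L[ℂ] ℂ) →L[ℂ] (W →L[ℂ] ℂ)) := fun N =>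
    ∑ n ∈ Finset.range N, (ContinuousLinearMap.apply ℂ ℂ (e n)).smulRight (es n)
  have hQ : ∀ N b, Q N b = ∑ n ∈ Finset.range N, b (e n) • es n := by
    intro N b
    simp only [Q, ContinuousLinearMap.sum_apply, ContinuousLinearMap.smulRight_apply,
      ContinuousLinearMap.apply_apply]
  have hQbdd : ∃ C, ∀ N, ‖Q N‖ ≤ C := by
    apply banach_steinhaus
    intro b
    have htend : Filter.Tendsto (fun N => ‖Q N b‖) Filter.atTop (nhds ‖b‖) := by
      have := (hdualbasis b).tendsto_sum_nat
      have h2 : Filter.Tendsto (fun N => Q N b) Filter.atTop (nhds b) := by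
        convert this using 1
        funext N
        rw [hQ]
      exact h2.norm
    obtain ⟨C, hC⟩ := htend.bddAbove_range
    exact ⟨C, fun N => hC (Set.mem_range_self N)⟩
  obtain ⟨C, hC⟩ := hQbdd
  set C' : ℝ := max C 1 with hC'
  have hC'pos : 0 < C' := lt_of_lt_of_le one_pos (le_max_right C 1)
  have hC'bd : ∀ N, ‖Q N‖ ≤ C' := fun N => le_trans (hC N) (le_max_left C 1)
  -- lower bound for R
  have hRlower : ∀ v : X, ‖v‖ ≤ C' * Bt * ‖R v‖ := by
    intro v
    have htend : Filter.Tendsto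
        (fun N => ‖∑ n ∈ Finset.range N, y n v • x n‖) Filter.atTop (nhds ‖v‖) :=
      (hrecon v).tendsto_sum_nat.norm
    apply le_of_tendsto htend
    filter_upwards with N
    -- bound each partial sum via duality
    apply NormedSpace.norm_le_dual_bound ℂ _ (by positivity)
    intro g
    have hgsum : g (∑ n ∈ Finset.range N, y n v • x n) = (Q N (Rc g)) (R v) := by
      rw [hQ, map_sum, ContinuousLinearMap.sum_apply]
      apply Finset.sum_congr rfl
      intro n _
      simp only [map_smul, ContinuousLinearMap.smul_apply, smul_eq_mul, hRc, hes, hR]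
      ring
    calc ‖g (∑ n ∈ Finset.range N, y n v • x n)‖ = ‖(Q N (Rc g)) (R v)‖ := by rw [hgsum]
      _ ≤ ‖Q N (Rc g)‖ * ‖R v‖ := (Q N (Rc g)).le_opNorm _
      _ ≤ (‖Q N‖ * ‖Rc g‖) * ‖R v‖ :=
          mul_le_mul_of_nonneg_right ((Q N).le_opNorm _) (norm_nonneg _)
      _ ≤ (C' * (Bt * ‖g‖)) * ‖R v‖ := by
          apply mul_le_mul_of_nonneg_right _ (norm_nonneg _)
          exact mul_le_mul (hC'bd N) (hRcupper g) (norm_nonneg _) (le_of_lt hC'pos)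
      _ = C' * Bt * ‖R v‖ * ‖g‖ := by ring
  constructor
  · refine ⟨(C' * Bt)⁻¹, B, by positivity, hBpos, fun v => ⟨?_, hRupper v⟩⟩
    rw [inv_mul_le_iff₀ (by positivity)]
    calc ‖v‖ ≤ C' * Bt * ‖R v‖ := hRlower v
      _ = C' * Bt * ‖R v‖ := rfl
  · refine ⟨B⁻¹, Bt, by positivity, hBtpos, fun g => ⟨?_, hRcupper g⟩⟩
    rw [inv_mul_le_iff₀ hBpos]
    exact hRclower g
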